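/- Let (ρ^{(r)})_{r∈(0,1]} be positive reals with (1 − ρ^{(r)})/r → β as r ↓ 0 for some β ∈ ℝ, and let (ℓ^{(r)})_{r∈(0,1]} be positive integers with r·ℓ^{(r)} → L as r ↓ 0 for some L > 0. Then r·Σ_{k=0}^{ℓ^{(r)}−1} (ρ^{(r)})^k converges as r ↓ 0, with limit (1 − exp(−β·L))/β if β ≠ 0, and limit L if β = 0. -/

import Mathlib

open Filter Real Set


/-- `r·Σ_{k<ℓ^{(r)}} (ρ^{(r)})^k` converges to `(1−e^{−βL})/β` (or `L` if `β = 0`). -/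
theorem stmt13 (β L : ℝ) (hL : 0 < L)
    (ρ : ℝ → ℝ) (hρpos : ∀ r ∈ Set.Ioc (0:ℝ) 1, 0 < ρ r)
    (hρlim : Filter.Tendsto (fun r => (1 - ρ r) / r) (nhdsWithin 0 (Set.Ioi 0)) (nhds β))
    (ℓ : ℝ → ℕ) (hℓpos : ∀ r ∈ Set.Ioc (0:ℝ) 1, 1 ≤ ℓ r)
    (hℓlim : Filter.Tendsto (fun r => r * (ℓ r : ℝ)) (nhdsWithin 0 (Set.Ioi 0)) (nhds L)) :
    Filter.Tendsto (fun r => r * ∑ k ∈ Finset.range (ℓ r), (ρ r) ^ k)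
      (nhdsWithin 0 (Set.Ioi 0))
      (nhds (if β = 0 then L else (1 - Real.exp (-(β * L))) / β)) := by
  set l := nhdsWithin (0:ℝ) (Set.Ioi 0) with hl
  have hmem : ∀ᶠ r in l, r ∈ Set.Ioc (0:ℝ) 1 :=
    Ioc_mem_nhdsGT_of_mem (by constructor <;> norm_num)
  have hrpos : ∀ᶠ r in l, 0 < r := eventually_mem_nhdsWithin
  -- ρ → 1
  have hρ1 : Tendsto ρ l (nhds 1) := by
    have h : Tendsto (fun r => 1 - r * ((1 - ρ r) / r)) l (nhds 1) := by
      have := (tendsto_id.mono_left nhdsWithin_le_nhds : Tendsto (fun r:ℝ => r) l (nhds 0)).mul hρlim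
      simpa using tendsto_const_nhds.sub this
    refine h.congr' ?_
    filter_upwards [hrpos] with r hr
    field_simp
    ring
  -- g : modified slope of log at 1
  set g : ℝ → ℝ := fun t => if t = 1 then 1 else Real.log t / (t - 1) with hg
  have hgl : Tendsto g (nhds 1) (nhds 1) := by
    have h12 : Tendsto g (nhdsWithin (1:ℝ) {(1:ℝ)}ᶜ ⊔ pure 1) (nhds 1) := by
      rw [tendsto_sup]
      constructor
      · have hd : HasDerivAt Real.log 1 1 := by
          simpa using Real.hasDerivAt_log (by norm_num : (1:ℝ) ≠ 0)
        have := hasDerivAt_iff_tendsto_slope.1 hd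
        refine this.congr' ?_
        filter_upwards [self_mem_nhdsWithin] with t ht
        have ht1 : t ≠ 1 := ht
        simp [slope, hg, ht1, Real.log_one, vsub_eq_sub, div_eq_inv_mul]
      · rw [Filter.tendsto_pure_left]
        intro s hs
        simpa [hg] using mem_of_mem_nhds hs
    rwa [nhdsNE_sup_pure] at h12
  -- log ρ / r → -β
  have hlog : Tendsto (fun r => Real.log (ρ r) / r) l (nhds (-β)) := by
    have h1 : Tendsto (fun r => g (ρ r) * ((ρ r - 1) / r)) l (nhds (1 * (-β))) := by
      refine (hgl.comp hρ1).mul ?_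
      have : Tendsto (fun r => -((1 - ρ r) / r)) l (nhds (-β)) := hρlim.neg
      refine this.congr ?_
      intro r; ring_nf
    rw [one_mul] at h1
    refine h1.congr' ?_
    filter_upwards [hrpos] with r hr
    by_cases hρr : ρ r = 1
    · simp [hg, hρr]
    · have h3 : ρ r - 1 ≠ 0 := sub_ne_zero.mpr hρr
      simp only [hg, if_neg hρr]
      rw [div_mul_div_comm, mul_comm (Real.log (ρ r)), mul_div_mul_left _ _ h3]
  -- ρ^ℓ → exp(-(β L))
  have hpow : Tendsto (fun r => (ρ r) ^ (ℓ r)) l (nhds (Real.exp (-(β * L)))) := by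
    have h1 : Tendsto (fun r => (r * (ℓ r : ℝ)) * (Real.log (ρ r) / r)) l
        (nhds (L * (-β))) := hℓlim.mul hlog
    have h2 : Tendsto (fun r => Real.exp ((r * (ℓ r : ℝ)) * (Real.log (ρ r) / r))) l
        (nhds (Real.exp (L * (-β)))) := (Real.continuous_exp.tendsto _).comp h1
    have : (L * (-β)) = -(β * L) := by ring
    rw [this] at h2
    refine h2.congr' ?_
    filter_upwards [hrpos, hmem] with r hr hmr
    have hne : r ≠ 0 := ne_of_gt hr
    have : (r * (ℓ r : ℝ)) * (Real.log (ρ r) / r) = (ℓ r : ℝ) * Real.log (ρ r) := by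
      field_simp
    rw [this, Real.exp_nat_mul, Real.exp_log (hρpos r hmr)]
  by_cases hβ : β = 0
  · -- squeeze
    subst hβ
    simp only [if_pos rfl]
    have hlow : Tendsto (fun r => (r * (ℓ r : ℝ)) * min 1 ((ρ r) ^ (ℓ r))) l (nhds L) := by
      have := hℓlim.mul ((tendsto_const_nhds (x := (1:ℝ))).min hpow)
      simpa using this
    have hhigh : Tendsto (fun r => (r * (ℓ r : ℝ)) * max 1 ((ρ r) ^ (ℓ r))) l (nhds L) := by
      have := hℓlim.mul ((tendsto_const_nhds (x := (1:ℝ))).max hpow)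
      simpa using this
    refine tendsto_of_tendsto_of_tendsto_of_le_of_le' hlow hhigh ?_ ?_
    · filter_upwards [hrpos, hmem] with r hr hmr
      have hρr := hρpos r hmr
      have key : ∀ k ∈ Finset.range (ℓ r), min 1 ((ρ r)^(ℓ r)) ≤ (ρ r)^k := by
        intro k hk
        rw [Finset.mem_range] at hk
        rcases le_or_gt (ρ r) 1 with h | h
        · exact le_trans (min_le_right _ _) (pow_le_pow_of_le_one hρr.le h hk.le)
        · exact le_trans (min_le_left _ _) (one_le_pow₀ h.le)
      have := Finset.card_nsmul_le_sum (Finset.range (ℓ r)) (fun k => (ρ r)^k) _ key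
      rw [Finset.card_range, nsmul_eq_mul] at this
      calc (r * (ℓ r : ℝ)) * min 1 ((ρ r)^(ℓ r)) = r * ((ℓ r : ℝ) * min 1 ((ρ r)^(ℓ r))) := by ring
        _ ≤ r * ∑ k ∈ Finset.range (ℓ r), (ρ r)^k := by
            exact mul_le_mul_of_nonneg_left this hr.le
    · filter_upwards [hrpos, hmem] with r hr hmr
      have hρr := hρpos r hmr
      have key : ∀ k ∈ Finset.range (ℓ r), (ρ r)^k ≤ max 1 ((ρ r)^(ℓ r)) := by
        intro k hk
        rw [Finset.mem_range] at hk
        rcases le_or_gt (ρ r) 1 with h | h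
        · exact le_trans (pow_le_one₀ hρr.le h) (le_max_left _ _)
        · exact le_trans (pow_le_pow_right₀ h.le hk.le) (le_max_right _ _)
      have := Finset.sum_le_card_nsmul (Finset.range (ℓ r)) (fun k => (ρ r)^k) _ key
      rw [Finset.card_range, nsmul_eq_mul] at this
      calc r * ∑ k ∈ Finset.range (ℓ r), (ρ r)^k
          ≤ r * ((ℓ r : ℝ) * max 1 ((ρ r)^(ℓ r))) := mul_le_mul_of_nonneg_left this hr.le
        _ = (r * (ℓ r : ℝ)) * max 1 ((ρ r)^(ℓ r)) := by ring
  · -- β ≠ 0 : geometric sum formula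
    simp only [if_neg hβ]
    have hev : ∀ᶠ r in l, ρ r ≠ 1 := by
      have h0 : ∀ᶠ r in l, (1 - ρ r) / r ≠ 0 := hρlim.eventually_ne hβ
      filter_upwards [h0, hrpos] with r h hr
      intro hρr
      rw [hρr] at h
      simp at h
    have hden : Tendsto (fun r => (ρ r - 1) / r) l (nhds (-β)) := by
      have := hρlim.neg
      refine this.congr ?_
      intro r; ring_nf
    have hnum : Tendsto (fun r => (ρ r)^(ℓ r) - 1) l (nhds (Real.exp (-(β * L)) - 1)) :=
      hpow.sub tendsto_const_nhds
    have h := hnum.div hden (by simpa using hβ)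
    have : (Real.exp (-(β * L)) - 1) / (-β) = (1 - Real.exp (-(β * L))) / β := by
      rw [div_neg, ← neg_div, neg_sub]
    rw [this] at h
    refine h.congr' ?_
    filter_upwards [hev, hrpos] with r hρ1r hr
    rw [geom_sum_eq hρ1r]
    have hne : r ≠ 0 := ne_of_gt hr
    have hρne : ρ r - 1 ≠ 0 := sub_ne_zero.mpr hρ1r
    simp only [Pi.div_apply]
    field_simp
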